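/- Let ψ: ℝ^d → ℝ be convex and differentiable, of the form ψ(x) = (1/2)x^T S x + φ(x), with S a symmetric matrix and φ periodic with respect to a lattice Γ. Then for every x ∈ ℝ^d and every γ ∈ Γ, |∇φ(x)·γ| ≤ (1/2) γ^T S γ. -/

import Mathlib

open Matrix

-- convexity gradient inequality
lemma aux_grad_le {E : Type*} [NormedAddCommGroup E] [NormedSpace ℝ E]
    {ψ : E → ℝ} (hconv : ConvexOn ℝ Set.univ ψ) {x v : E} {f : E →L[ℝ] ℝ}
    (hf : HasFDerivAt ψ f x) : f v ≤ ψ (x + v) - ψ x := by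
  set g : ℝ → ℝ := fun t => ψ (x + t • v) with hg
  have hgconv : ConvexOn ℝ Set.univ g := by
    have := hconv.comp_affineMap (AffineMap.lineMap x (x + v) : ℝ →ᵃ[ℝ] E)
    have e : g = ψ ∘ ⇑(AffineMap.lineMap x (x + v) : ℝ →ᵃ[ℝ] E) := by
      funext t
      simp [g, Function.comp, AffineMap.lineMap_apply, add_comm]
    rw [e]; simpa using this
  have hline : HasDerivAt (fun t : ℝ => x + t • v) v 0 := by
    simpa using ((hasDerivAt_id (0:ℝ)).smul_const v).const_add x
  have hgd : HasDerivAt g (f v) 0 := by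
    have hf' : HasFDerivAt ψ f (x + (0:ℝ) • v) := by simpa using hf
    exact hf'.comp_hasDerivAt 0 hline
  have := hgconv.le_slope_of_hasDerivAt (Set.mem_univ (0:ℝ)) (Set.mem_univ (1:ℝ))
    one_pos hgd
  simpa [slope_def_field, g] using this

lemma aux_quad_deriv {d : ℕ} (S : Matrix (Fin d) (Fin d) ℝ) (x : Fin d → ℝ) :
    ∃ D : (Fin d → ℝ) →L[ℝ] ℝ,
      HasFDerivAt (fun y : Fin d → ℝ => (1 / 2 : ℝ) * (y ⬝ᵥ S.mulVec y)) D x ∧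
      ∀ v, D v = (1/2:ℝ) * (x ⬝ᵥ S.mulVec v) + (1/2:ℝ) * (v ⬝ᵥ S.mulVec x) := by
  classical
  set L : (Fin d → ℝ) →ₗ[ℝ] ((Fin d → ℝ) →L[ℝ] ℝ) :=
    { toFun := fun u => LinearMap.toContinuousLinearMap (Matrix.toLinearMap₂' ℝ S u)
      map_add' := by intro u w; ext v; simp
      map_smul' := by intro c u; ext v; simp } with hL
  set B : (Fin d → ℝ) →L[ℝ] ((Fin d → ℝ) →L[ℝ] ℝ) := LinearMap.toContinuousLinearMap L with hB
  have hBapp : ∀ u v, B u v = u ⬝ᵥ S.mulVec v := by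
    intro u v
    simp [hB, hL, Matrix.toLinearMap₂'_apply']
  have hid : HasFDerivAt (id : (Fin d → ℝ) → (Fin d → ℝ)) (ContinuousLinearMap.id ℝ _) x :=
    hasFDerivAt_id x
  have hBB := B.hasFDerivAt_of_bilinear hid hid
  have h2 := hBB.const_mul (1/2 : ℝ)
  refine ⟨(1/2:ℝ) • (B.precompR (Fin d → ℝ) x (ContinuousLinearMap.id ℝ _) +
      B.precompL (Fin d → ℝ) (ContinuousLinearMap.id ℝ _) x), ?_, ?_⟩
  · exact h2.congr_of_eventuallyEq (Filter.Eventually.of_forall fun y => by simp [hBapp])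
  · intro v
    simp [hBapp, ContinuousLinearMap.precompR, ContinuousLinearMap.precompL]

theorem stmt18 (d : ℕ) (hd : 1 ≤ d)
    (b : Module.Basis (Fin d) ℝ (Fin d → ℝ))
    (Γ : AddSubgroup (Fin d → ℝ))
    (hΓ : (Γ : Set (Fin d → ℝ)) = Set.range (fun k : Fin d → ℤ => ∑ i, (k i : ℝ) • b i))
    (S : Matrix (Fin d) (Fin d) ℝ) (hS : S.IsSymm)
    (φ ψ : (Fin d → ℝ) → ℝ)
    (hψ : ∀ x, ψ x = (1 / 2 : ℝ) * (x ⬝ᵥ S.mulVec x) + φ x)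
    (hconv : ConvexOn ℝ Set.univ ψ)
    (hdiff : Differentiable ℝ ψ)
    (hper : ∀ γ ∈ Γ, ∀ x, φ (x + γ) = φ x) :
    ∀ x : Fin d → ℝ, ∀ γ ∈ Γ,
      |fderiv ℝ φ x γ| ≤ (1 / 2 : ℝ) * (γ ⬝ᵥ S.mulVec γ) := by
  intro x γ hγ
  -- symmetry of the quadratic form
  have hsym : ∀ u w : Fin d → ℝ, u ⬝ᵥ S.mulVec w = w ⬝ᵥ S.mulVec u := by
    intro u w
    rw [Matrix.dotProduct_mulVec, ← Matrix.mulVec_transpose, hS.eq, dotProduct_comm]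
  obtain ⟨D, hD, hDval⟩ := aux_quad_deriv S x
  have hDγ : ∀ v, D v = x ⬝ᵥ S.mulVec v := by
    intro v; rw [hDval v, hsym v x]; ring
  -- φ is differentiable at x with derivative fderiv ψ x - D
  have hψx : HasFDerivAt ψ (fderiv ℝ ψ x) x := (hdiff x).hasFDerivAt
  have hφ : HasFDerivAt φ (fderiv ℝ ψ x - D) x := by
    have h := hψx.sub hD
    have : φ = fun y => ψ y - (1 / 2 : ℝ) * (y ⬝ᵥ S.mulVec y) := by
      funext y; rw [hψ y]; ring
    rw [this]; exact h
  have hfd : fderiv ℝ φ x γ = fderiv ℝ ψ x γ - x ⬝ᵥ S.mulVec γ := by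
    rw [hφ.fderiv]; simp [hDγ]
  -- key expansion of ψ(x + w) - ψ x for lattice vectors
  have hexp : ∀ w ∈ Γ, ψ (x + w) - ψ x = x ⬝ᵥ S.mulVec w + (1/2 : ℝ) * (w ⬝ᵥ S.mulVec w) := by
    intro w hw
    rw [hψ, hψ, hper w hw x]
    have : (x + w) ⬝ᵥ S.mulVec (x + w)
        = x ⬝ᵥ S.mulVec x + 2 * (x ⬝ᵥ S.mulVec w) + w ⬝ᵥ S.mulVec w := by
      rw [Matrix.mulVec_add, dotProduct_add, add_dotProduct,
        add_dotProduct, hsym w x]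
      ring
    rw [this]; ring
  -- the two directional bounds
  have hup : fderiv ℝ ψ x γ ≤ ψ (x + γ) - ψ x := aux_grad_le hconv hψx
  have hdown : fderiv ℝ ψ x (-γ) ≤ ψ (x + -γ) - ψ x := aux_grad_le hconv hψx
  rw [hexp γ hγ] at hup
  rw [hexp (-γ) (neg_mem hγ)] at hdown
  have hneg : fderiv ℝ ψ x (-γ) = -(fderiv ℝ ψ x γ) := map_neg _ _
  have hnegq : (-γ) ⬝ᵥ S.mulVec (-γ) = γ ⬝ᵥ S.mulVec γ := by
    simp [Matrix.mulVec_neg]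
  have hnegx : x ⬝ᵥ S.mulVec (-γ) = -(x ⬝ᵥ S.mulVec γ) := by
    simp [Matrix.mulVec_neg]
  rw [hneg, hnegq, hnegx] at hdown
  rw [hfd, abs_le]
  constructor <;> linarith
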